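/- Let X, Y, Z be pairwise disjoint node sets in a maximal PDAG G such that G is b-amenable relative to (X,Y) and Z ∩ b-Forb(X,Y,G) = ∅. Let D be a DAG represented by G and let p be a shortest proper non-causal path from X to Y in D that is d-connecting given Z. Then the corresponding path p* in G is a proper b-non-causal definite status path, and moreover for every collider subpath C_l → C ← C_r of p*, the nodes C_l and C_r are non-adjacent in G. -/

import Mathlib

/-- A partially directed graph with at most one edge between any two nodes
and no directed cycles (a PDAG). -/
structure PDAG (V : Type) where
  dir : V → V → Prop
  undir : V → V → Prop
  undir_symm : ∀ {x y}, undir x y → undir y x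
  undir_irrefl : ∀ x, ¬ undir x x
  dir_not_undir : ∀ x y, dir x y → ¬ undir x y
  acyclic : ∀ x, ¬ Relation.TransGen dir x x

namespace PDAG

variable {V : Type}

/-- There is an undirected edge between `x` and `y`. -/
def undirE (G : PDAG V) (x y : V) : Prop := G.undir x y ∨ G.undir y x

/-- `x` and `y` are adjacent. -/
def adj (G : PDAG V) (x y : V) : Prop := G.dir x y ∨ G.dir y x ∨ G.undirE x y

/-- The list of consecutive pairs of a list. -/
def consPairs (p : List V) : List (V × V) := p.zip p.tail

/-- The list of consecutive triples of a list. -/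
def triples : List V → List (V × V × V)
  | a :: b :: c :: rest => (a, b, c) :: triples (b :: c :: rest)
  | _ => []

/-- `p` is a path in `G`: at least two distinct nodes, pairwise successive adjacency. -/
def IsPath (G : PDAG V) (p : List V) : Prop :=
  2 ≤ p.length ∧ p.Nodup ∧ ∀ e ∈ consPairs p, G.adj e.1 e.2

/-- `p` is a path in `G` from `x` to `y`. -/
def PathFromTo (G : PDAG V) (p : List V) (x y : V) : Prop :=
  G.IsPath p ∧ p.head? = some x ∧ p.getLast? = some y

/-- `p` is a causal (fully directed) path in `G`. -/
def IsCausal (G : PDAG V) (p : List V) : Prop :=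
  2 ≤ p.length ∧ p.Nodup ∧ ∀ e ∈ consPairs p, G.dir e.1 e.2

/-- `p` is a non-causal path: it contains at least one edge directed backwards. -/
def NonCausal (G : PDAG V) (p : List V) : Prop :=
  G.IsPath p ∧ ∃ e ∈ consPairs p, G.dir e.2 e.1

/-- `p` is b-possibly causal in `G`: there is no edge `V_i ← V_j` for `i < j`. -/
def BPossCausal (G : PDAG V) (p : List V) : Prop :=
  G.IsPath p ∧ ∀ i j : Fin p.length, (i : ℕ) < (j : ℕ) → ¬ G.dir (p.get j) (p.get i)

/-- `p` is b-non-causal in `G`: some edge `V_i ← V_j` with `i < j` exists in `G`. -/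
def BNonCausal (G : PDAG V) (p : List V) : Prop :=
  G.IsPath p ∧ ∃ i j : Fin p.length, (i : ℕ) < (j : ℕ) ∧ G.dir (p.get j) (p.get i)

/-- A path with no edge on it pointing backwards (possibly causal in the local sense). -/
def LocalPossCausal (G : PDAG V) (p : List V) : Prop :=
  G.IsPath p ∧ ∀ e ∈ consPairs p, ¬ G.dir e.2 e.1

/-- `p` is unshielded: the outer nodes of every consecutive triple are non-adjacent. -/
def Unshielded (G : PDAG V) (p : List V) : Prop :=
  ∀ t ∈ triples p, ¬ G.adj t.1 t.2.2

/-- The middle node of a triple is a collider. -/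
def ColliderAt (G : PDAG V) (t : V × V × V) : Prop :=
  G.dir t.1 t.2.1 ∧ G.dir t.2.2 t.2.1

/-- The middle node of a triple is a definite non-collider. -/
def DefNonColliderAt (G : PDAG V) (t : V × V × V) : Prop :=
  G.dir t.2.1 t.1 ∨ G.dir t.2.1 t.2.2 ∨
    (G.undirE t.1 t.2.1 ∧ G.undirE t.2.1 t.2.2 ∧ ¬ G.adj t.1 t.2.2)

/-- `p` is a definite status path. -/
def DefiniteStatus (G : PDAG V) (p : List V) : Prop :=
  ∀ t ∈ triples p, G.ColliderAt t ∨ G.DefNonColliderAt t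

/-- `y` is a descendant of `x` in `G` (via directed paths; every node descends from itself). -/
def Desc (G : PDAG V) (x y : V) : Prop := x = y ∨ Relation.TransGen G.dir x y

/-- `p` is d-connecting given `Z`: every collider on `p` has a descendant in `Z`,
and every (definite) non-collider on `p` is not in `Z`. -/
def DConn (G : PDAG V) (p : List V) (Z : Set V) : Prop :=
  ∀ t ∈ triples p,
    (G.ColliderAt t → ∃ z ∈ Z, G.Desc t.2.1 z) ∧ (¬ G.ColliderAt t → t.2.1 ∉ Z)

/-- `Z` blocks the path `p`. -/
def Blocked (G : PDAG V) (p : List V) (Z : Set V) : Prop := ¬ G.DConn p Z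

/-- `G` is closed under Meek's orientation rules R1–R4 (a maximal PDAG). -/
def ClosedMeek (G : PDAG V) : Prop :=
  (∀ a b c, G.dir a b → G.undirE b c → ¬ G.adj a c → G.dir b c) ∧
  (∀ a b c, G.dir a b → G.dir b c → G.undirE a c → G.dir a c) ∧
  (∀ a b c d, G.undirE a b → G.undirE a c → G.undirE a d →
     G.dir c b → G.dir d b → ¬ G.adj c d → G.dir a b) ∧
  (∀ a b c d, G.undirE a b → G.undirE a c → G.undirE a d →
     G.dir d c → G.dir b d → ¬ G.adj b c → G.dir a c)

/-- `G` is a DAG: it has no undirected edges. -/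
def IsDAG (G : PDAG V) : Prop := ∀ x y, ¬ G.undir x y

/-- `G` and `H` have the same unshielded colliders. -/
def SameUC (G H : PDAG V) : Prop :=
  ∀ a b c, (G.dir a b ∧ G.dir c b ∧ ¬ G.adj a c) ↔ (H.dir a b ∧ H.dir c b ∧ ¬ H.adj a c)

/-- `H` is represented by `G`: same adjacencies, same unshielded colliders,
and every directed edge of `G` is in `H`. -/
def RepresentedBy (H G : PDAG V) : Prop :=
  (∀ x y, H.adj x y ↔ G.adj x y) ∧ SameUC H G ∧ ∀ x y, G.dir x y → H.dir x y

/-- `p` is a proper path from (a member of) `X` to (a member of) `Y`: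
only its first node lies in `X`. -/
def ProperPathFromTo (G : PDAG V) (X Y : Set V) (p : List V) : Prop :=
  G.IsPath p ∧ (∃ x ∈ X, p.head? = some x) ∧ (∃ y ∈ Y, p.getLast? = some y) ∧
    ∀ v ∈ p.tail, v ∉ X

/-- `w'` is a b-possible descendant of the node `w`. -/
def BPossDescNode (G : PDAG V) (w w' : V) : Prop :=
  w' = w ∨ ∃ p, G.BPossCausal p ∧ p.head? = some w ∧ p.getLast? = some w'

/-- The b-possible descendants of the node set `X` in `G`. -/
def BPossDe (G : PDAG V) (X : Set V) : Set V :=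
  {w | w ∈ X ∨ ∃ x ∈ X, ∃ p, G.BPossCausal p ∧ p.head? = some x ∧ p.getLast? = some w}

/-- The b-possible ancestors of the node set `X` in `G`. -/
def BPossAn (G : PDAG V) (X : Set V) : Set V :=
  {w | w ∈ X ∨ ∃ x ∈ X, ∃ p, G.BPossCausal p ∧ p.head? = some w ∧ p.getLast? = some x}

/-- The b-forbidden set relative to `(X, Y)` in `G`. -/
def BForb (G : PDAG V) (X Y : Set V) : Set V :=
  {w' | ∃ w p, w ∉ X ∧ G.ProperPathFromTo X Y p ∧ G.BPossCausal p ∧ w ∈ p ∧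
    G.BPossDescNode w w'}

/-- `G` is b-amenable relative to `(X, Y)`: every proper b-possibly causal path
from `X` to `Y` starts with a directed edge out of `X`. -/
def BAmenable (G : PDAG V) (X Y : Set V) : Prop :=
  ∀ p, G.ProperPathFromTo X Y p → G.BPossCausal p →
    ∀ a b, p.head? = some a → p.tail.head? = some b → G.dir a b

/-- The b-blocking condition: `Z` blocks every proper b-non-causal definite status
path from `X` to `Y` in `G`. -/
def BBlocking (G : PDAG V) (X Y Z : Set V) : Prop :=
  ∀ p, G.ProperPathFromTo X Y p → G.BNonCausal p → G.DefiniteStatus p → G.Blocked p Z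

/-- The b-adjustment criterion for `Z` relative to `(X, Y)` in `G`. -/
def BAdjCrit (G : PDAG V) (X Y Z : Set V) : Prop :=
  G.BAmenable X Y ∧ Z ∩ G.BForb X Y = ∅ ∧ G.BBlocking X Y Z

/-- In a DAG: `Z` blocks every proper non-causal path from `X` to `Y`. -/
def DagBlocking (D : PDAG V) (X Y Z : Set V) : Prop :=
  ∀ p, D.ProperPathFromTo X Y p → D.NonCausal p → D.Blocked p Z

/-- The canonical adjustment set `b-Adjust(X, Y, G)`. -/
def BAdjust (G : PDAG V) (X Y : Set V) : Set V :=
  G.BPossAn (X ∪ Y) \ (X ∪ Y ∪ G.BForb X Y)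

/-- `C` is a CPDAG: a maximal PDAG representing a Markov equivalence class of DAGs
in which every undirected edge is realized in both orientations by represented DAGs. -/
def IsCPDAG (C : PDAG V) : Prop :=
  C.ClosedMeek ∧ (∃ D : PDAG V, D.IsDAG ∧ RepresentedBy D C) ∧
  ∀ x y, C.undirE x y →
    (∃ D : PDAG V, D.IsDAG ∧ RepresentedBy D C ∧ D.dir x y) ∧
    (∃ D : PDAG V, D.IsDAG ∧ RepresentedBy D C ∧ D.dir y x)

section Toolkit

lemma dir_asymm (G : PDAG V) {x y : V} (h : G.dir x y) (h' : G.dir y x) : False :=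
  G.acyclic x (Relation.TransGen.head h (Relation.TransGen.single h'))

lemma tri_contra (G : PDAG V) {x y z : V} (h1 : G.dir x y) (h2 : G.dir y z)
    (h3 : G.dir z x) : False :=
  G.acyclic x (Relation.TransGen.head h1 (Relation.TransGen.head h2
    (Relation.TransGen.single h3)))

lemma adj_symm (G : PDAG V) {x y : V} (h : G.adj x y) : G.adj y x := by
  rcases h with h | h | h | h
  exacts [Or.inr (Or.inl h), Or.inl h, Or.inr (Or.inr (Or.inr h)),
    Or.inr (Or.inr (Or.inl h))]

lemma desc_head (D : PDAG V) {x w z : V} (h : D.dir x w) (h2 : D.Desc w z) : D.Desc x z := by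
  rcases h2 with rfl | h2
  · exact Or.inr (Relation.TransGen.single h)
  · exact Or.inr (Relation.TransGen.head h h2)

section rep
variable {G D : PDAG V}

lemma dag_resolve (hD : D.IsDAG) {x y : V} (h : D.adj x y) :
    D.dir x y ∨ D.dir y x := by
  rcases h with h | h | h | h
  exacts [Or.inl h, Or.inr h, absurd h (hD x y), absurd h (hD y x)]

lemma dir_lift (hrep : RepresentedBy D G) {x y : V} (h : G.dir x y) : D.dir x y :=
  hrep.2.2 x y h

lemma not_gdir_of_ddir (hrep : RepresentedBy D G) {x y : V} (h : D.dir x y) :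
    ¬ G.dir y x := fun hg => D.dir_asymm h (dir_lift hrep hg)

/-- if `x → v ← y` in `D` and the edge `y → v` is not in `G`, then `x,y` adjacent in `D`. -/
lemma shielded_of_uc (hrep : RepresentedBy D G) {x y v : V}
    (h1 : D.dir x v) (h2 : D.dir y v) (h3 : ¬ G.dir y v) : D.adj x y := by
  by_contra hadj
  exact h3 ((hrep.2.1 x v y).mp ⟨h1, h2, hadj⟩).2.1

end rep

/-! ### index lemmas for `consPairs`, `triples`, lists -/

lemma consPairs_cons_cons (a b : V) (l : List V) :
    consPairs (a :: b :: l) = (a, b) :: consPairs (b :: l) := rfl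

lemma mem_consPairs_iff : ∀ (p : List V) (e : V × V),
    e ∈ consPairs p ↔ ∃ j : ℕ, ∃ h : j + 1 < p.length, e = (p[j], p[j+1])
  | [], e => by simp [consPairs]
  | [a], e => by simp [consPairs]
  | a :: b :: l, e => by
    rw [consPairs_cons_cons, List.mem_cons, mem_consPairs_iff (b :: l) e]
    constructor
    · rintro (rfl | ⟨j, h, rfl⟩)
      · exact ⟨0, by simp, rfl⟩
      · exact ⟨j + 1, by simpa using h, by simp⟩
    · rintro ⟨j, h, rfl⟩
      cases j with
      | zero => exact Or.inl rfl
      | succ j => exact Or.inr ⟨j, by simpa using h, by simp⟩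

lemma mem_triples_iff : ∀ (p : List V) (t : V × V × V),
    t ∈ triples p ↔ ∃ j : ℕ, ∃ h : j + 2 < p.length, t = (p[j], p[j+1], p[j+2])
  | [], t => by simp [triples]
  | [a], t => by simp [triples]
  | [a, b], t => by simp [triples]
  | a :: b :: c :: l, t => by
    rw [show triples (a :: b :: c :: l) = (a, b, c) :: triples (b :: c :: l) from rfl,
      List.mem_cons, mem_triples_iff (b :: c :: l) t]
    constructor
    · rintro (rfl | ⟨j, h, rfl⟩)
      · exact ⟨0, by simp, rfl⟩
      · exact ⟨j + 1, by simpa using h, by simp⟩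
    · rintro ⟨j, h, rfl⟩
      cases j with
      | zero => exact Or.inl rfl
      | succ j => exact Or.inr ⟨j, by simpa using h, by simp⟩

lemma mem_tail_iff (p : List V) (v : V) :
    v ∈ p.tail ↔ ∃ j : ℕ, ∃ h : j + 1 < p.length, v = p[j+1] := by
  cases p with
  | nil => simp
  | cons a l =>
    simp only [List.tail_cons, List.mem_iff_getElem, List.length_cons]
    constructor
    · rintro ⟨j, h, rfl⟩; exact ⟨j, by omega, by simp⟩
    · rintro ⟨j, h, rfl⟩; exact ⟨j, by omega, by simp⟩

lemma head?_eq' (p : List V) (h : 0 < p.length) : p.head? = some (p[0]) := by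
  cases p with
  | nil => simp at h
  | cons a l => rfl

lemma getLast?_eq' (p : List V) (h : 0 < p.length) :
    p.getLast? = some (p[p.length - 1]'(by omega)) := by
  rw [List.getLast?_eq_getElem?, List.getElem?_eq_getElem]

lemma tail_head?_eq' (p : List V) (h : 1 < p.length) : p.tail.head? = some (p[1]) := by
  rw [head?_eq' p.tail (by simp [List.length_tail]; omega), List.getElem_tail]

lemma mem_of_idx (p : List V) (j : ℕ) (h : j < p.length) : p[j] ∈ p :=
  List.getElem_mem h

end Toolkit
section Piece2

lemma gidx (l : List V) {i j : ℕ} (h : i = j) (hi : i < l.length) :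
    l[i] = l[j]'(h ▸ hi) := by subst h; rfl

variable {G D : PDAG V} {X Y Z : Set V}

/-- transitivity along a forward-directed segment of a list. -/
lemma transGen_of_forward (D : PDAG V) (p : List V) (s : ℕ)
    (hfwd : ∀ j, s ≤ j → ∀ h : j + 1 < p.length, D.dir p[j] p[j+1]) :
    ∀ i j (_ : s ≤ i) (hij : i < j) (hj : j < p.length),
      Relation.TransGen D.dir (p[i]'(by omega)) p[j] := by
  intro i j hsi hij hj
  induction j with
  | zero => omega
  | succ j ih =>
    rcases Nat.lt_or_ge i j with h | h
    · exact (ih (by omega) (by omega)).tail (hfwd j (by omega) hj)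
    · have : i = j := by omega
      subst this
      exact Relation.TransGen.single (hfwd i (by omega) hj)

/-- extraction of a nodup directed path from `TransGen`. -/
lemma exists_dirPath (D : PDAG V) {w z : V} (h : Relation.TransGen D.dir w z) :
    ∃ q : List V, 2 ≤ q.length ∧ q.Nodup ∧
      (∀ j : ℕ, ∀ hj : j + 1 < q.length, D.dir q[j] q[j+1]) ∧
      ∃ h0 : 0 < q.length, q[0] = w ∧ q[q.length - 1]'(by omega) = z := by
  induction h using Relation.TransGen.head_induction_on with
  | single h =>
    rename_i a
    have hne : a ≠ z := by rintro rfl; exact D.acyclic _ (Relation.TransGen.single h)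
    refine ⟨[a, z], by simp, by simp [hne], ?_, by simp, rfl, rfl⟩
    intro j hj
    have hj0 : j = 0 := by simp at hj; omega
    subst hj0
    simpa using h
  | head hwm htr ih =>
    rename_i w' m
    obtain ⟨q, hlen, hnd, hfwd, h0, hq0, hql⟩ := ih
    have hwq : w' ∉ q := by
      intro hmem
      rw [List.mem_iff_getElem] at hmem
      obtain ⟨j, hj, hjw⟩ := hmem
      rcases Nat.eq_zero_or_pos j with rfl | hjpos
      · rw [hq0] at hjw
        exact D.acyclic w' (Relation.TransGen.single (hjw ▸ hwm))
      · have : Relation.TransGen D.dir q[0] q[j] :=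
          transGen_of_forward D q 0 (fun j _ h => hfwd j h) 0 j (by omega) hjpos hj
        rw [hq0, hjw] at this
        exact D.acyclic w' (Relation.TransGen.head hwm this)
    refine ⟨w' :: q, by simp; omega, by simp [hnd, hwq], ?_, by simp, rfl, ?_⟩
    · intro j hj
      cases j with
      | zero =>
        have h1 : (w' :: q)[1] = q[0] := List.getElem_cons_succ w' q 0 (by simpa using hj)
        simpa [h1, hq0] using hwm
      | succ j =>
        simp only [List.getElem_cons_succ]
        exact hfwd j (by simpa using hj)
    · obtain ⟨n, hn⟩ : ∃ n, q.length = n + 1 := ⟨q.length - 1, by omega⟩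
      rw [gidx (w' :: q) (show (w' :: q).length - 1 = n + 1 by simp [hn]),
        List.getElem_cons_succ]
      have := hql
      rw [gidx q (show q.length - 1 = n by omega)] at this
      exact this

end Piece2
section Piece3
variable {G D : PDAG V} {X Y Z : Set V}

/-- a `D`-directed nodup list is a b-possibly causal path in `G`. -/
lemma bposs_of_forward (hrep : RepresentedBy D G) {q : List V}
    (hlen : 2 ≤ q.length) (hnd : q.Nodup)
    (hfwd : ∀ j : ℕ, ∀ hj : j + 1 < q.length, D.dir q[j] q[j+1]) :
    G.BPossCausal q := by
  refine ⟨⟨hlen, hnd, ?_⟩, ?_⟩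
  · intro e he
    rw [mem_consPairs_iff] at he
    obtain ⟨j, hj, rfl⟩ := he
    exact (hrep.1 _ _).mp (Or.inl (hfwd j hj))
  · intro i j hij hgd
    have hdd : D.dir (q.get j) (q.get i) := dir_lift hrep hgd
    have : Relation.TransGen D.dir q[(i : ℕ)] q[(j : ℕ)] :=
      transGen_of_forward D q 0 (fun j _ h => hfwd j h) i j (by omega) hij j.isLt
    simp only [List.get_eq_getElem] at hdd
    exact D.acyclic _ (this.tail hdd)

lemma desc_bposs (hrep : RepresentedBy D G) {w z : V} (h : D.Desc w z) :
    G.BPossDescNode w z := by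
  rcases h with rfl | h
  · exact Or.inl rfl
  · obtain ⟨q, hlen, hnd, hfwd, h0, hq0, hql⟩ := exists_dirPath D h
    refine Or.inr ⟨q, bposs_of_forward hrep hlen hnd hfwd, ?_, ?_⟩
    · rw [head?_eq' q h0, hq0]
    · rw [getLast?_eq' q h0, hql]

lemma proper_transfer (hrep : RepresentedBy D G) {p : List V}
    (hp : D.ProperPathFromTo X Y p) : G.ProperPathFromTo X Y p := by
  obtain ⟨⟨hlen, hnd, hadj⟩, h2, h3, h4⟩ := hp
  exact ⟨⟨hlen, hnd, fun e he => (hrep.1 _ _).mp (hadj e he)⟩, h2, h3, h4⟩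

lemma forb_contra (hforb : Z ∩ G.BForb X Y = ∅) {q : List V} {w z : V}
    (hq : G.ProperPathFromTo X Y q) (hpc : G.BPossCausal q)
    (hw : w ∈ q) (hwX : w ∉ X) (hz : z ∈ Z) (hdesc : G.BPossDescNode w z) : False := by
  have : z ∈ Z ∩ G.BForb X Y := ⟨hz, w, q, hwX, hq, hpc, hw, hdesc⟩
  rw [hforb] at this
  exact this

/-- a fully forward proper path in `D` cannot carry a node of the tail with a
descendant in `Z`. -/
lemma causal_contra (hrep : RepresentedBy D G) (hforb : Z ∩ G.BForb X Y = ∅)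
    {q : List V} (hq : D.ProperPathFromTo X Y q)
    (hfwd : ∀ j : ℕ, ∀ hj : j + 1 < q.length, D.dir q[j] q[j+1])
    {w z : V} (hw : w ∈ q.tail) (hz : z ∈ Z) (hdesc : D.Desc w z) : False := by
  have hGq := proper_transfer hrep hq
  have hpc : G.BPossCausal q := bposs_of_forward hrep hq.1.1 hq.1.2.1 hfwd
  exact forb_contra hforb hGq hpc (List.mem_of_mem_tail hw) (hq.2.2.2 w hw) hz
    (desc_bposs hrep hdesc)

/-- from `D.IsPath q` and no backward edge, all edges are forward. -/
lemma forward_of_no_backward (hD : D.IsDAG) {q : List V} (hq : D.IsPath q)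
    (hnb : ¬ ∃ m : ℕ, ∃ h : m + 1 < q.length, D.dir q[m+1] q[m]) :
    ∀ j : ℕ, ∀ hj : j + 1 < q.length, D.dir q[j] q[j+1] := by
  intro j hj
  have hadj : D.adj q[j] q[j+1] := hq.2.2 _ ((mem_consPairs_iff q _).mpr ⟨j, hj, rfl⟩)
  rcases dag_resolve hD hadj with h | h
  · exact h
  · exact absurd ⟨j, hj, h⟩ hnb

/-- extract a backward edge index from `NonCausal`. -/
lemma noncausal_idx {q : List V} (h : D.NonCausal q) :
    ∃ m : ℕ, ∃ hm : m + 1 < q.length, D.dir q[m+1] q[m] := by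
  obtain ⟨-, e, he, hdir⟩ := h
  rw [mem_consPairs_iff] at he
  obtain ⟨m, hm, rfl⟩ := he
  exact ⟨m, hm, hdir⟩

/-- build `NonCausal` from a backward edge index. -/
lemma noncausal_of_idx {q : List V} (hq : D.IsPath q)
    (h : ∃ m : ℕ, ∃ hm : m + 1 < q.length, D.dir q[m+1] q[m]) : D.NonCausal q := by
  obtain ⟨m, hm, hdir⟩ := h
  exact ⟨hq, (q[m], q[m+1]), (mem_consPairs_iff q _).mpr ⟨m, hm, rfl⟩, hdir⟩

end Piece3
section Piece4
variable {G D : PDAG V} {X Y Z : Set V}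

lemma part2 (hamen : G.BAmenable X Y) (hforb : Z ∩ G.BForb X Y = ∅)
    (hD : D.IsDAG) (hrep : RepresentedBy D G) {p : List V}
    (hp : D.ProperPathFromTo X Y p) (hnc : D.NonCausal p) (hconn : D.DConn p Z) :
    G.BNonCausal p := by
  classical
  by_contra hbnc
  have hGp := proper_transfer hrep hp
  have hpc : G.BPossCausal p :=
    ⟨hGp.1, fun i j hij hd => hbnc ⟨hGp.1, i, j, hij, hd⟩⟩
  have hlen : 2 ≤ p.length := hp.1.1
  have hfirst : G.dir p[0] p[1] :=
    hamen p hGp hpc p[0] p[1] (head?_eq' p (by omega)) (tail_head?_eq' p (by omega))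
  have hfirstD : D.dir p[0] p[1] := dir_lift hrep hfirst
  -- least backward index
  have hP : ∃ m, ∃ hm : m + 1 < p.length, D.dir p[m+1] p[m] := noncausal_idx hnc
  obtain ⟨m0, hm0, hd0⟩ := hP
  let P : ℕ → Prop := fun m => ∃ hm : m + 1 < p.length, D.dir p[m+1] p[m]
  have hPex : ∃ m, P m := ⟨m0, hm0, hd0⟩
  let k := Nat.find hPex
  obtain ⟨hk1, hk2⟩ : ∃ hm : k + 1 < p.length, D.dir p[k+1] p[k] := Nat.find_spec hPex
  have hkpos : 1 ≤ k := by
    rcases Nat.eq_zero_or_pos k with h0 | h0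
    · exfalso
      have : D.dir p[1] p[0] := by
        have := hk2; rw [gidx p (show k + 1 = 1 by omega), gidx p (show k = 0 by omega)] at this
        exact this
      exact D.dir_asymm hfirstD this
    · exact h0
  obtain ⟨m, hm⟩ : ∃ m, k = m + 1 := ⟨k - 1, by omega⟩
  have hmlen : m + 2 < p.length := by omega
  have hnotm : ¬ P m := Nat.find_min hPex (by omega)
  have hk2' : D.dir p[m+2] p[m+1] := by
    rw [gidx p (show m + 2 = k + 1 by omega) (by omega),
      gidx p (show m + 1 = k by omega) (by omega)]
    exact hk2
  have hfm : D.dir p[m] p[m+1] := by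
    have hadj : D.adj p[m] p[m+1] :=
      hp.1.2.2 _ ((mem_consPairs_iff p _).mpr ⟨m, by omega, rfl⟩)
    rcases dag_resolve hD hadj with h | h
    · exact h
    · exact absurd ⟨by omega, h⟩ hnotm
  -- collider at p[m+1]
  have htmem : (p[m], p[m+1], p[m+2]) ∈ triples p :=
    (mem_triples_iff p _).mpr ⟨m, by omega, rfl⟩
  have hcol : D.ColliderAt (p[m], p[m+1], p[m+2]) := ⟨hfm, hk2'⟩
  obtain ⟨z, hz, hdesc⟩ := (hconn _ htmem).1 hcol
  exact forb_contra hforb hGp hpc (mem_of_idx p (m+1) (by omega))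
    (hp.2.2.2 _ ((mem_tail_iff p _).mpr ⟨m, by omega, rfl⟩)) hz (desc_bposs hrep hdesc)

end Piece4
section Piece5
variable {G D : PDAG V} {X Y Z : Set V}

lemma length_erase {p : List V} {k : ℕ} (hk2 : k + 1 < p.length) :
    (p.eraseIdx k).length = p.length - 1 := by
  rw [List.length_eraseIdx, if_pos (by omega)]

lemma erase_get_lt (p : List V) {k j : ℕ} (hjk : j < k) (hb : j < p.length)
    (hj : j < (p.eraseIdx k).length) : (p.eraseIdx k)[j] = p[j] := by
  rw [List.getElem_eraseIdx, dif_pos hjk]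

lemma erase_get_ge (p : List V) {k j : ℕ} (hjk : k ≤ j) (hb : j + 1 < p.length)
    (hj : j < (p.eraseIdx k).length) : (p.eraseIdx k)[j] = p[j+1] := by
  rw [List.getElem_eraseIdx, dif_neg (by omega)]

/-- every consecutive pair of `p.eraseIdx k` is either a pair of `p` or the bridging pair. -/
lemma pairs_erase_cases {p : List V} {k : ℕ} (hk1 : 1 ≤ k) (hk2 : k + 1 < p.length)
    {e : V × V} (he : e ∈ consPairs (p.eraseIdx k)) :
    e ∈ consPairs p ∨
      ∃ m, ∃ hm : k = m + 1, e = (p[m]'(by omega), p[k+1]'hk2) := by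
  rw [mem_consPairs_iff] at he
  obtain ⟨j, hj, rfl⟩ := he
  have hql : (p.eraseIdx k).length = p.length - 1 := length_erase hk2
  rcases Nat.lt_or_ge (j+1) k with h | h
  · left
    rw [erase_get_lt p (by omega) (by omega) (by omega),
      erase_get_lt p (by omega) (by omega) (by omega)]
    exact (mem_consPairs_iff p _).mpr ⟨j, by omega, rfl⟩
  rcases Nat.lt_or_ge j k with h2 | h2
  · right
    refine ⟨j, by omega, ?_⟩
    rw [erase_get_lt p (by omega) (by omega) (by omega),
      erase_get_ge p (by omega) (by omega) (by omega)]
    congr 1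
    exact gidx p (by omega) (by omega)
  · left
    rw [erase_get_ge p (by omega) (by omega) (by omega),
      erase_get_ge p (by omega) (by omega) (by omega)]
    exact (mem_consPairs_iff p _).mpr ⟨j + 1, by omega, rfl⟩

lemma pair_in_erase_low {p : List V} {k m : ℕ} (hmk : m + 1 < k) (hk2 : k + 1 < p.length) :
    ((p[m]'(by omega), p[m+1]'(by omega)) : V × V) ∈ consPairs (p.eraseIdx k) := by
  refine (mem_consPairs_iff _ _).mpr ⟨m, by rw [length_erase hk2]; omega, ?_⟩
  rw [erase_get_lt p (by omega) (by omega) (by rw [length_erase hk2]; omega),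
    erase_get_lt p (by omega) (by omega) (by rw [length_erase hk2]; omega)]

lemma pair_in_erase_high {p : List V} {k j : ℕ} (hkj : k ≤ j) (hb : j + 2 < p.length) :
    ((p[j+1]'(by omega), p[j+2]'(by omega)) : V × V) ∈ consPairs (p.eraseIdx k) := by
  refine (mem_consPairs_iff _ _).mpr ⟨j, by rw [length_erase (by omega)]; omega, ?_⟩
  rw [erase_get_ge p (by omega) (by omega) (by rw [length_erase (by omega)]; omega),
    erase_get_ge p (by omega) (by omega) (by rw [length_erase (by omega)]; omega)]

lemma pair_in_erase_mid {p : List V} {k m : ℕ} (hm : k = m + 1) (hk2 : k + 1 < p.length) :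
    ((p[m]'(by omega), p[k+1]'hk2) : V × V) ∈ consPairs (p.eraseIdx k) := by
  refine (mem_consPairs_iff _ _).mpr ⟨m, by rw [length_erase hk2]; omega, ?_⟩
  rw [erase_get_lt p (by omega) (by omega) (by rw [length_erase hk2]; omega),
    erase_get_ge p (by omega) (by omega) (by rw [length_erase hk2]; omega)]
  congr 2
  omega

lemma triples_erase_cases {p : List V} {k : ℕ} (hk1 : 1 ≤ k) (hk2 : k + 1 < p.length)
    {t : V × V × V} (ht : t ∈ triples (p.eraseIdx k)) :
    t ∈ triples p ∨
      (∃ m, ∃ hm : k = m + 2, t = (p[m]'(by omega), p[m+1]'(by omega), p[k+1]'hk2)) ∨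
      (∃ m, ∃ hm : k = m + 1, ∃ hb : k + 2 < p.length,
        t = (p[m]'(by omega), p[k+1]'(by omega), p[k+2]'hb)) := by
  rw [mem_triples_iff] at ht
  obtain ⟨j, hj, rfl⟩ := ht
  have hql : (p.eraseIdx k).length = p.length - 1 := length_erase hk2
  rcases Nat.lt_or_ge (j+2) k with h | h
  · left
    rw [erase_get_lt p (by omega) (by omega) (by omega),
      erase_get_lt p (by omega) (by omega) (by omega),
      erase_get_lt p (by omega) (by omega) (by omega)]
    exact (mem_triples_iff p _).mpr ⟨j, by omega, rfl⟩
  rcases Nat.lt_or_ge (j+1) k with h2 | h2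
  · -- j + 2 = k
    right; left
    refine ⟨j, by omega, ?_⟩
    rw [erase_get_lt p (by omega) (by omega) (by omega),
      erase_get_lt p (by omega) (by omega) (by omega),
      erase_get_ge p (by omega) (by omega) (by omega)]
    refine congrArg _ (congrArg _ ?_)
    exact gidx p (by omega) (by omega)
  rcases Nat.lt_or_ge j k with h3 | h3
  · -- j + 1 = k
    right; right
    refine ⟨j, by omega, by omega, ?_⟩
    rw [erase_get_lt p (by omega) (by omega) (by omega),
      erase_get_ge p (by omega) (by omega) (by omega),
      erase_get_ge p (by omega) (by omega) (by omega)]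
    refine congrArg _ ?_
    refine congrArg₂ _ ?_ ?_
    · exact gidx p (by omega) (by omega)
    · exact gidx p (by omega) (by omega)
  · left
    rw [erase_get_ge p (by omega) (by omega) (by omega),
      erase_get_ge p (by omega) (by omega) (by omega),
      erase_get_ge p (by omega) (by omega) (by omega)]
    exact (mem_triples_iff p _).mpr ⟨j + 1, by omega, rfl⟩

lemma isPath_erase (hpath : D.IsPath p) {k : ℕ} (hk1 : 1 ≤ k) (hk2 : k + 1 < p.length)
    (hadj : ∀ m (hm : k = m + 1), D.adj (p[m]'(by omega)) (p[k+1]'hk2)) :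
    D.IsPath (p.eraseIdx k) := by
  refine ⟨by rw [length_erase hk2]; omega, hpath.2.1.sublist (List.eraseIdx_sublist p k), ?_⟩
  intro e he
  rcases pairs_erase_cases hk1 hk2 he with h | ⟨m, hm, rfl⟩
  · exact hpath.2.2 e h
  · exact hadj m hm

lemma proper_erase (hp : D.ProperPathFromTo X Y p) {k : ℕ} (hk1 : 1 ≤ k)
    (hk2 : k + 1 < p.length)
    (hadj : ∀ m (hm : k = m + 1), D.adj (p[m]'(by omega)) (p[k+1]'hk2)) :
    D.ProperPathFromTo X Y (p.eraseIdx k) := by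
  obtain ⟨hpath, ⟨x, hx, hhead⟩, ⟨y, hy, hlast⟩, htail⟩ := hp
  have hql : (p.eraseIdx k).length = p.length - 1 := length_erase hk2
  refine ⟨isPath_erase hpath hk1 hk2 hadj, ⟨x, hx, ?_⟩, ⟨y, hy, ?_⟩, ?_⟩
  · rw [head?_eq' _ (by omega)]
    rw [head?_eq' _ (by omega : 0 < p.length)] at hhead
    rw [erase_get_lt p (by omega) (by omega) (by omega)]
    exact hhead
  · rw [getLast?_eq' _ (by omega)]
    rw [getLast?_eq' _ (by omega : 0 < p.length)] at hlast
    have : (p.eraseIdx k)[(p.eraseIdx k).length - 1]'(by omega) =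
        p[p.length - 1]'(by omega) := by
      rw [erase_get_ge p (by omega) (by omega) (by omega)]
      exact gidx p (by omega) (by omega)
    rw [this]
    exact hlast
  · intro v hv
    rw [mem_tail_iff] at hv
    obtain ⟨j, hjb, rfl⟩ := hv
    rcases Nat.lt_or_ge (j+1) k with h | h
    · rw [erase_get_lt p (by omega) (by omega) (by omega)]
      exact htail _ ((mem_tail_iff p _).mpr ⟨j, by omega, rfl⟩)
    · rw [erase_get_ge p (by omega) (by omega) (by omega)]
      exact htail _ ((mem_tail_iff p _).mpr ⟨j + 1, by omega, rfl⟩)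

/-- the master d-connectedness lemma for `p.eraseIdx k`. -/
lemma dconn_erase (hconnp : D.DConn p Z) {k : ℕ} (hk1 : 1 ≤ k) (hk2 : k + 1 < p.length)
    (HL : ∀ m, ∀ hm : k = m + 2,
      (D.ColliderAt (p[m]'(by omega), p[m+1]'(by omega), p[k+1]'hk2) →
        ∃ z ∈ Z, D.Desc (p[m+1]'(by omega)) z) ∧
      (¬ D.ColliderAt (p[m]'(by omega), p[m+1]'(by omega), p[k+1]'hk2) →
        p[m+1]'(by omega) ∉ Z))
    (HR : ∀ m, ∀ hm : k = m + 1, ∀ hb : k + 2 < p.length,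
      (D.ColliderAt (p[m]'(by omega), p[k+1]'(by omega), p[k+2]'hb) →
        ∃ z ∈ Z, D.Desc (p[k+1]'(by omega)) z) ∧
      (¬ D.ColliderAt (p[m]'(by omega), p[k+1]'(by omega), p[k+2]'hb) →
        p[k+1]'(by omega) ∉ Z)) :
    D.DConn (p.eraseIdx k) Z := by
  intro t ht
  rcases triples_erase_cases hk1 hk2 ht with h | ⟨m, hm, rfl⟩ | ⟨m, hm, hb, rfl⟩
  · exact hconnp t h
  · exact HL m hm
  · exact HR m hm hb

end Piece5
section Piece6
variable {G D : PDAG V} {X Y Z : Set V}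

lemma key (hamen : G.BAmenable X Y) (hforb : Z ∩ G.BForb X Y = ∅)
    (hD : D.IsDAG) (hrep : RepresentedBy D G) {p : List V}
    (hp : D.ProperPathFromTo X Y p) (hnc : D.NonCausal p) (hconn : D.DConn p Z)
    (hshort : ∀ q, D.ProperPathFromTo X Y q → D.NonCausal q → D.DConn q Z →
      p.length ≤ q.length)
    {i : ℕ} (hi : i + 2 < p.length)
    (hacG : G.adj (p[i]'(by omega)) (p[i+2]'(by omega)))
    (hba : ¬ G.dir (p[i+1]'(by omega)) (p[i]'(by omega)))
    (hbc : ¬ G.dir (p[i+1]'(by omega)) (p[i+2]'(by omega))) : False := by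
  classical
  have hGp := proper_transfer hrep hp
  have hab : D.adj (p[i]'(by omega)) (p[i+1]'(by omega)) :=
    hp.1.2.2 _ ((mem_consPairs_iff p _).mpr ⟨i, by omega, rfl⟩)
  have hbc2 : D.adj (p[i+1]'(by omega)) (p[i+2]'(by omega)) :=
    hp.1.2.2 _ ((mem_consPairs_iff p _).mpr ⟨i+1, by omega, rfl⟩)
  have hacD : D.adj (p[i]'(by omega)) (p[i+2]'(by omega)) := (hrep.1 _ _).mpr hacG
  have htb : ((p[i]'(by omega), p[i+1]'(by omega), p[i+2]'(by omega)) : V × V × V)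
      ∈ triples p := (mem_triples_iff p _).mpr ⟨i, hi, rfl⟩
  have hk2 : (i+1) + 1 < p.length := by omega
  have hadjmid : ∀ m (hm : i + 1 = m + 1),
      D.adj (p[m]'(by omega)) (p[(i+1)+1]'hk2) := by
    intro m hm
    have hmi : m = i := by omega
    subst hmi
    exact hacD
  have hqpath : D.IsPath (p.eraseIdx (i+1)) :=
    isPath_erase hp.1 (by omega) hk2 hadjmid
  have hqproper : D.ProperPathFromTo X Y (p.eraseIdx (i+1)) :=
    proper_erase hp (by omega) hk2 hadjmid
  have hshorter : ¬ (p.length ≤ (p.eraseIdx (i+1)).length) := by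
    rw [length_erase hk2]; omega
  rcases dag_resolve hD hab with hα | hα <;> rcases dag_resolve hD hbc2 with hβ | hβ <;>
    rcases dag_resolve hD hacD with hγ | hγ
  -- C1 : a→b, b→c, a→c
  case inl.inl.inl =>
    have hHL : ∀ m (hm : i + 1 = m + 2),
        (D.ColliderAt (p[m]'(by omega), p[m+1]'(by omega), p[(i+1)+1]'hk2) →
          ∃ z ∈ Z, D.Desc (p[m+1]'(by omega)) z) ∧
        (¬ D.ColliderAt (p[m]'(by omega), p[m+1]'(by omega), p[(i+1)+1]'hk2) →
          p[m+1]'(by omega) ∉ Z) := by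
      intro m hm
      have hmi : i = m + 1 := by omega
      subst hmi
      have ht0 : ((p[m]'(by omega), p[m+1]'(by omega), p[m+2]'(by omega)) : V × V × V)
          ∈ triples p := (mem_triples_iff p _).mpr ⟨m, by omega, rfl⟩
      have hnotZ : p[m+1]'(by omega) ∉ Z := by
        refine (hconn _ ht0).2 (fun hcol => ?_)
        exact D.dir_asymm hcol.2 hα
      exact ⟨fun hcol => absurd hcol.2 (fun h => D.dir_asymm h hγ), fun _ => hnotZ⟩
    have hHR : ∀ m (hm : i + 1 = m + 1) (hb : (i+1) + 2 < p.length),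
        (D.ColliderAt (p[m]'(by omega), p[(i+1)+1]'(by omega), p[(i+1)+2]'hb) →
          ∃ z ∈ Z, D.Desc (p[(i+1)+1]'(by omega)) z) ∧
        (¬ D.ColliderAt (p[m]'(by omega), p[(i+1)+1]'(by omega), p[(i+1)+2]'hb) →
          p[(i+1)+1]'(by omega) ∉ Z) := by
      intro m hm hb
      have hmi : m = i := by omega
      subst hmi
      have ht1 : ((p[m+1]'(by omega), p[m+2]'(by omega), p[m+3]'(by omega)) : V × V × V)
          ∈ triples p := (mem_triples_iff p _).mpr ⟨m+1, by omega, rfl⟩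
      constructor
      · intro hcol
        exact (hconn _ ht1).1 ⟨hβ, hcol.2⟩
      · intro hncol
        exact (hconn _ ht1).2 (fun hcol => hncol ⟨hγ, hcol.2⟩)
    have hqconn : D.DConn (p.eraseIdx (i+1)) Z := dconn_erase hconn (by omega) hk2 hHL hHR
    -- non-causality: p has a backward edge away from i, i+1
    obtain ⟨m, hm, hmd⟩ := noncausal_idx hnc
    have hmne : m ≠ i := by
      rintro rfl; exact D.dir_asymm hmd hα
    have hmne2 : m ≠ i + 1 := by
      rintro rfl; exact D.dir_asymm hmd hβ
    have hqnc : D.NonCausal (p.eraseIdx (i+1)) := by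
      rcases Nat.lt_or_ge m (i+1) with h | h
      · exact ⟨hqpath, _, pair_in_erase_low (by omega) hk2, hmd⟩
      · obtain ⟨m', rfl⟩ : ∃ m', m = m' + 1 := ⟨m - 1, by omega⟩
        exact ⟨hqpath, _, pair_in_erase_high (k := i+1) (by omega) (by omega), hmd⟩
    exact hshorter (hshort _ hqproper hqnc hqconn)
  -- C2 : a→b, b→c, c→a (cycle)
  case inl.inl.inr => exact D.tri_contra hα hβ hγ
  -- C7 : b→a, c→b, a→c (cycle)
  case inr.inr.inl => exact D.tri_contra hγ hβ hα
  -- C3 : a→b, c→b, a→c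
  case inl.inr.inl =>
    have hHL : ∀ m (hm : i + 1 = m + 2),
        (D.ColliderAt (p[m]'(by omega), p[m+1]'(by omega), p[(i+1)+1]'hk2) →
          ∃ z ∈ Z, D.Desc (p[m+1]'(by omega)) z) ∧
        (¬ D.ColliderAt (p[m]'(by omega), p[m+1]'(by omega), p[(i+1)+1]'hk2) →
          p[m+1]'(by omega) ∉ Z) := by
      intro m hm
      have hmi : i = m + 1 := by omega
      subst hmi
      have ht0 : ((p[m]'(by omega), p[m+1]'(by omega), p[m+2]'(by omega)) : V × V × V)
          ∈ triples p := (mem_triples_iff p _).mpr ⟨m, by omega, rfl⟩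
      have hnotZ : p[m+1]'(by omega) ∉ Z := by
        refine (hconn _ ht0).2 (fun hcol => ?_)
        exact D.dir_asymm hcol.2 hα
      exact ⟨fun hcol => absurd hcol.2 (fun h => D.dir_asymm h hγ), fun _ => hnotZ⟩
    have hHR : ∀ m (hm : i + 1 = m + 1) (hb : (i+1) + 2 < p.length),
        (D.ColliderAt (p[m]'(by omega), p[(i+1)+1]'(by omega), p[(i+1)+2]'hb) →
          ∃ z ∈ Z, D.Desc (p[(i+1)+1]'(by omega)) z) ∧
        (¬ D.ColliderAt (p[m]'(by omega), p[(i+1)+1]'(by omega), p[(i+1)+2]'hb) →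
          p[(i+1)+1]'(by omega) ∉ Z) := by
      intro m hm hb
      have hmi : m = i := by omega
      subst hmi
      have ht1 : ((p[m+1]'(by omega), p[m+2]'(by omega), p[m+3]'(by omega)) : V × V × V)
          ∈ triples p := (mem_triples_iff p _).mpr ⟨m+1, by omega, rfl⟩
      constructor
      · intro hcol
        obtain ⟨z, hz, hdz⟩ := (hconn _ htb).1 ⟨hα, hβ⟩
        exact ⟨z, hz, desc_head D hβ hdz⟩
      · intro hncol
        exact (hconn _ ht1).2 (fun hcol => D.dir_asymm hcol.1 hβ)
    have hqconn : D.DConn (p.eraseIdx (i+1)) Z := dconn_erase hconn (by omega) hk2 hHL hHR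
    by_cases hEx : ∃ m, ∃ h : m + 1 < (p.eraseIdx (i+1)).length,
        D.dir ((p.eraseIdx (i+1))[m+1]'h) ((p.eraseIdx (i+1))[m]'(by omega))
    · exact hshorter (hshort _ hqproper (noncausal_of_idx hqpath hEx) hqconn)
    · have hfwd := forward_of_no_backward hD hqpath hEx
      obtain ⟨z, hz, hdz⟩ := (hconn _ htb).1 ⟨hα, hβ⟩
      refine causal_contra hrep hforb hqproper hfwd ?_ hz (desc_head D hβ hdz)
      refine (mem_tail_iff _ _).mpr ⟨i, by rw [length_erase hk2]; omega, ?_⟩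
      rw [erase_get_ge p (by omega) (by omega) (by rw [length_erase hk2]; omega)]
  -- C4 : a→b, c→b, c→a
  case inl.inr.inr =>
    have hHL : ∀ m (hm : i + 1 = m + 2),
        (D.ColliderAt (p[m]'(by omega), p[m+1]'(by omega), p[(i+1)+1]'hk2) →
          ∃ z ∈ Z, D.Desc (p[m+1]'(by omega)) z) ∧
        (¬ D.ColliderAt (p[m]'(by omega), p[m+1]'(by omega), p[(i+1)+1]'hk2) →
          p[m+1]'(by omega) ∉ Z) := by
      intro m hm
      have hmi : i = m + 1 := by omega
      subst hmi
      have ht0 : ((p[m]'(by omega), p[m+1]'(by omega), p[m+2]'(by omega)) : V × V × V)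
          ∈ triples p := (mem_triples_iff p _).mpr ⟨m, by omega, rfl⟩
      constructor
      · intro hcol
        obtain ⟨z, hz, hdz⟩ := (hconn _ htb).1 ⟨hα, hβ⟩
        exact ⟨z, hz, desc_head D hα hdz⟩
      · intro hncol
        exact (hconn _ ht0).2 (fun hcol => D.dir_asymm hcol.2 hα)
    have hHR : ∀ m (hm : i + 1 = m + 1) (hb : (i+1) + 2 < p.length),
        (D.ColliderAt (p[m]'(by omega), p[(i+1)+1]'(by omega), p[(i+1)+2]'hb) →
          ∃ z ∈ Z, D.Desc (p[(i+1)+1]'(by omega)) z) ∧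
        (¬ D.ColliderAt (p[m]'(by omega), p[(i+1)+1]'(by omega), p[(i+1)+2]'hb) →
          p[(i+1)+1]'(by omega) ∉ Z) := by
      intro m hm hb
      have hmi : m = i := by omega
      subst hmi
      have ht1 : ((p[m+1]'(by omega), p[m+2]'(by omega), p[m+3]'(by omega)) : V × V × V)
          ∈ triples p := (mem_triples_iff p _).mpr ⟨m+1, by omega, rfl⟩
      constructor
      · intro hcol
        exact absurd hcol.1 (fun h => D.dir_asymm h hγ)
      · intro _
        exact (hconn _ ht1).2 (fun hcol => D.dir_asymm hcol.1 hβ)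
    have hqconn : D.DConn (p.eraseIdx (i+1)) Z := dconn_erase hconn (by omega) hk2 hHL hHR
    have hqnc : D.NonCausal (p.eraseIdx (i+1)) :=
      ⟨hqpath, _, pair_in_erase_mid (m := i) rfl hk2, hγ⟩
    exact hshorter (hshort _ hqproper hqnc hqconn)
  -- C8 : b→a, c→b, c→a
  case inr.inr.inr =>
    have hHL : ∀ m (hm : i + 1 = m + 2),
        (D.ColliderAt (p[m]'(by omega), p[m+1]'(by omega), p[(i+1)+1]'hk2) →
          ∃ z ∈ Z, D.Desc (p[m+1]'(by omega)) z) ∧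
        (¬ D.ColliderAt (p[m]'(by omega), p[m+1]'(by omega), p[(i+1)+1]'hk2) →
          p[m+1]'(by omega) ∉ Z) := by
      intro m hm
      have hmi : i = m + 1 := by omega
      subst hmi
      have ht0 : ((p[m]'(by omega), p[m+1]'(by omega), p[m+2]'(by omega)) : V × V × V)
          ∈ triples p := (mem_triples_iff p _).mpr ⟨m, by omega, rfl⟩
      constructor
      · intro hcol
        exact (hconn _ ht0).1 ⟨hcol.1, hα⟩
      · intro hncol
        exact (hconn _ ht0).2 (fun hcol => hncol ⟨hcol.1, hγ⟩)
    have hHR : ∀ m (hm : i + 1 = m + 1) (hb : (i+1) + 2 < p.length),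
        (D.ColliderAt (p[m]'(by omega), p[(i+1)+1]'(by omega), p[(i+1)+2]'hb) →
          ∃ z ∈ Z, D.Desc (p[(i+1)+1]'(by omega)) z) ∧
        (¬ D.ColliderAt (p[m]'(by omega), p[(i+1)+1]'(by omega), p[(i+1)+2]'hb) →
          p[(i+1)+1]'(by omega) ∉ Z) := by
      intro m hm hb
      have hmi : m = i := by omega
      subst hmi
      have ht1 : ((p[m+1]'(by omega), p[m+2]'(by omega), p[m+3]'(by omega)) : V × V × V)
          ∈ triples p := (mem_triples_iff p _).mpr ⟨m+1, by omega, rfl⟩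
      constructor
      · intro hcol
        exact absurd hcol.1 (fun h => D.dir_asymm h hγ)
      · intro _
        exact (hconn _ ht1).2 (fun hcol => D.dir_asymm hcol.1 hβ)
    have hqconn : D.DConn (p.eraseIdx (i+1)) Z := dconn_erase hconn (by omega) hk2 hHL hHR
    have hqnc : D.NonCausal (p.eraseIdx (i+1)) :=
      ⟨hqpath, _, pair_in_erase_mid (m := i) rfl hk2, hγ⟩
    exact hshorter (hshort _ hqproper hqnc hqconn)
  -- C6 : b→a, b→c, c→a
  case inr.inl.inr =>
    by_cases hsp : (p[i+2]'(by omega)) ∈ Z ∧ ∃ hb : i + 3 < p.length,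
        D.dir (p[i+3]'hb) (p[i+2]'(by omega))
    · -- reroute branch: erase c = p[i+2]
      obtain ⟨hcZ, hub, hud⟩ := hsp
      have hk2' : (i+2) + 1 < p.length := by omega
      have hadjbu : D.adj (p[i+1]'(by omega)) (p[(i+2)+1]'hk2') :=
        D.adj_symm (shielded_of_uc hrep hud hβ hbc)
      have hadjmid' : ∀ m (hm : i + 2 = m + 1),
          D.adj (p[m]'(by omega)) (p[(i+2)+1]'hk2') := by
        intro m hm
        have hmi : m = i + 1 := by omega
        subst hmi
        exact hadjbu
      have hqpath' : D.IsPath (p.eraseIdx (i+2)) :=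
        isPath_erase hp.1 (by omega) hk2' hadjmid'
      have hqproper' : D.ProperPathFromTo X Y (p.eraseIdx (i+2)) :=
        proper_erase hp (by omega) hk2' hadjmid'
      have hHL : ∀ m (hm : i + 2 = m + 2),
          (D.ColliderAt (p[m]'(by omega), p[m+1]'(by omega), p[(i+2)+1]'hk2') →
            ∃ z ∈ Z, D.Desc (p[m+1]'(by omega)) z) ∧
          (¬ D.ColliderAt (p[m]'(by omega), p[m+1]'(by omega), p[(i+2)+1]'hk2') →
            p[m+1]'(by omega) ∉ Z) := by
        intro m hm
        have hmi : m = i := by omega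
        subst hmi
        constructor
        · intro hcol
          exact absurd hcol.1 (fun h => D.dir_asymm h hα)
        · intro _
          exact (hconn _ htb).2 (fun hcol => D.dir_asymm hcol.1 hα)
      have hHR : ∀ m (hm : i + 2 = m + 1) (hb : (i+2) + 2 < p.length),
          (D.ColliderAt (p[m]'(by omega), p[(i+2)+1]'(by omega), p[(i+2)+2]'hb) →
            ∃ z ∈ Z, D.Desc (p[(i+2)+1]'(by omega)) z) ∧
          (¬ D.ColliderAt (p[m]'(by omega), p[(i+2)+1]'(by omega), p[(i+2)+2]'hb) →
            p[(i+2)+1]'(by omega) ∉ Z) := by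
        intro m hm hb
        have hmi : m = i + 1 := by omega
        subst hmi
        have ht2 : ((p[i+2]'(by omega), p[i+3]'(by omega), p[i+4]'(by omega)) : V × V × V)
            ∈ triples p := (mem_triples_iff p _).mpr ⟨i+2, by omega, rfl⟩
        have hunotZ : p[i+3]'(by omega) ∉ Z :=
          (hconn _ ht2).2 (fun hcol => D.dir_asymm hcol.1 hud)
        constructor
        · intro hcol
          exact ⟨p[i+2]'(by omega), hcZ, Or.inr (Relation.TransGen.single hud)⟩
        · intro _
          exact hunotZ
      have hqconn : D.DConn (p.eraseIdx (i+2)) Z :=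
        dconn_erase hconn (by omega) hk2' hHL hHR
      have hqnc : D.NonCausal (p.eraseIdx (i+2)) :=
        ⟨hqpath', _, pair_in_erase_low (by omega) hk2', hα⟩
      have hshorter' : ¬ (p.length ≤ (p.eraseIdx (i+2)).length) := by
        rw [length_erase hk2']; omega
      exact hshorter' (hshort _ hqproper' hqnc hqconn)
    · -- main branch: erase b = p[i+1]
      have hcfact : (p[i+2]'(by omega)) ∈ Z →
          ∀ hb : i + 3 < p.length, ¬ D.dir (p[i+3]'hb) (p[i+2]'(by omega)) := by
        intro h1 hb h2
        exact hsp ⟨h1, hb, h2⟩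
      have hHL : ∀ m (hm : i + 1 = m + 2),
          (D.ColliderAt (p[m]'(by omega), p[m+1]'(by omega), p[(i+1)+1]'hk2) →
            ∃ z ∈ Z, D.Desc (p[m+1]'(by omega)) z) ∧
          (¬ D.ColliderAt (p[m]'(by omega), p[m+1]'(by omega), p[(i+1)+1]'hk2) →
            p[m+1]'(by omega) ∉ Z) := by
        intro m hm
        have hmi : i = m + 1 := by omega
        subst hmi
        have ht0 : ((p[m]'(by omega), p[m+1]'(by omega), p[m+2]'(by omega)) : V × V × V)
            ∈ triples p := (mem_triples_iff p _).mpr ⟨m, by omega, rfl⟩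
        constructor
        · intro hcol
          exact (hconn _ ht0).1 ⟨hcol.1, hα⟩
        · intro hncol
          exact (hconn _ ht0).2 (fun hcol => hncol ⟨hcol.1, hγ⟩)
      have hHR : ∀ m (hm : i + 1 = m + 1) (hb : (i+1) + 2 < p.length),
          (D.ColliderAt (p[m]'(by omega), p[(i+1)+1]'(by omega), p[(i+1)+2]'hb) →
            ∃ z ∈ Z, D.Desc (p[(i+1)+1]'(by omega)) z) ∧
          (¬ D.ColliderAt (p[m]'(by omega), p[(i+1)+1]'(by omega), p[(i+1)+2]'hb) →
            p[(i+1)+1]'(by omega) ∉ Z) := by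
        intro m hm hb
        have hmi : m = i := by omega
        subst hmi
        have ht1 : ((p[m+1]'(by omega), p[m+2]'(by omega), p[m+3]'(by omega)) : V × V × V)
            ∈ triples p := (mem_triples_iff p _).mpr ⟨m+1, by omega, rfl⟩
        have hcnotZ : p[m+2]'(by omega) ∉ Z := by
          by_cases huc : D.dir (p[m+3]'(by omega)) (p[m+2]'(by omega))
          · intro hcZ
            exact hcfact hcZ (by omega) huc
          · exact (hconn _ ht1).2 (fun hcol => huc hcol.2)
        constructor
        · intro hcol
          exact absurd hcol.1 (fun h => D.dir_asymm h hγ)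
        · intro _
          exact hcnotZ
      have hqconn : D.DConn (p.eraseIdx (i+1)) Z := dconn_erase hconn (by omega) hk2 hHL hHR
      have hqnc : D.NonCausal (p.eraseIdx (i+1)) :=
        ⟨hqpath, _, pair_in_erase_mid (m := i) rfl hk2, hγ⟩
      exact hshorter (hshort _ hqproper hqnc hqconn)
  -- C5 : b→a, b→c, a→c
  case inr.inl.inl =>
    by_cases hsp : (p[i]'(by omega)) ∈ Z ∧ ∃ m1, ∃ hm1 : i = m1 + 1,
        D.dir (p[m1]'(by omega)) (p[i]'(by omega))
    · -- reroute branch: erase a = p[i]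
      obtain ⟨haZ, m1, hm1, hwa⟩ := hsp
      subst hm1
      have hk2'' : (m1+1) + 1 < p.length := by omega
      have hadjwb : D.adj (p[m1]'(by omega)) (p[(m1+1)+1]'hk2'') :=
        shielded_of_uc hrep hwa hα hba
      have hadjmid'' : ∀ m (hm : m1 + 1 = m + 1),
          D.adj (p[m]'(by omega)) (p[(m1+1)+1]'hk2'') := by
        intro m hm
        obtain rfl : m = m1 := by omega
        exact hadjwb
      have hqpath'' : D.IsPath (p.eraseIdx (m1+1)) :=
        isPath_erase hp.1 (by omega) hk2'' hadjmid''
      have hqproper'' : D.ProperPathFromTo X Y (p.eraseIdx (m1+1)) :=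
        proper_erase hp (by omega) hk2'' hadjmid''
      have hHL : ∀ m (hm : m1 + 1 = m + 2),
          (D.ColliderAt (p[m]'(by omega), p[m+1]'(by omega), p[(m1+1)+1]'hk2'') →
            ∃ z ∈ Z, D.Desc (p[m+1]'(by omega)) z) ∧
          (¬ D.ColliderAt (p[m]'(by omega), p[m+1]'(by omega), p[(m1+1)+1]'hk2'') →
            p[m+1]'(by omega) ∉ Z) := by
        intro m hm
        have hmi : m1 = m + 1 := by omega
        subst hmi
        have ht0 : ((p[m]'(by omega), p[m+1]'(by omega), p[m+2]'(by omega)) : V × V × V)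
            ∈ triples p := (mem_triples_iff p _).mpr ⟨m, by omega, rfl⟩
        have hwnotZ : p[m+1]'(by omega) ∉ Z :=
          (hconn _ ht0).2 (fun hcol => D.dir_asymm hcol.2 hwa)
        constructor
        · intro hcol
          exact ⟨p[m+2]'(by omega), haZ, Or.inr (Relation.TransGen.single hwa)⟩
        · intro _
          exact hwnotZ
      have hHR : ∀ m (hm : m1 + 1 = m + 1) (hb : (m1+1) + 2 < p.length),
          (D.ColliderAt (p[m]'(by omega), p[(m1+1)+1]'(by omega), p[(m1+1)+2]'hb) →
            ∃ z ∈ Z, D.Desc (p[(m1+1)+1]'(by omega)) z) ∧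
          (¬ D.ColliderAt (p[m]'(by omega), p[(m1+1)+1]'(by omega), p[(m1+1)+2]'hb) →
            p[(m1+1)+1]'(by omega) ∉ Z) := by
        intro m hm hb
        obtain rfl : m = m1 := by omega
        have hbnotZ : p[(m+1)+1]'(by omega) ∉ Z :=
          (hconn _ htb).2 (fun hcol => D.dir_asymm hcol.1 hα)
        constructor
        · intro hcol
          exact absurd hcol.2 (fun h => D.dir_asymm h hβ)
        · intro _
          exact hbnotZ
      have hqconn : D.DConn (p.eraseIdx (m1+1)) Z :=
        dconn_erase hconn (by omega) hk2'' hHL hHR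
      by_cases hEx : ∃ m, ∃ h : m + 1 < (p.eraseIdx (m1+1)).length,
          D.dir ((p.eraseIdx (m1+1))[m+1]'h) ((p.eraseIdx (m1+1))[m]'(by omega))
      · have hshorter'' : ¬ (p.length ≤ (p.eraseIdx (m1+1)).length) := by
          rw [length_erase hk2'']; omega
        exact hshorter'' (hshort _ hqproper'' (noncausal_of_idx hqpath'' hEx) hqconn)
      · have hfwd := forward_of_no_backward hD hqpath'' hEx
        refine causal_contra hrep hforb hqproper'' hfwd ?_ haZ
          (Or.inr (Relation.TransGen.single hα))
        refine (mem_tail_iff _ _).mpr ⟨m1, by rw [length_erase hk2'']; omega, ?_⟩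
        rw [erase_get_ge p (by omega) (by omega) (by rw [length_erase hk2'']; omega)]
    · -- main branch: erase b = p[i+1]
      have hcfact : (p[i]'(by omega)) ∈ Z → ∀ m1 (hm1 : i = m1 + 1),
          ¬ D.dir (p[m1]'(by omega)) (p[i]'(by omega)) := by
        intro h1 m1 hm1 h2
        exact hsp ⟨h1, m1, hm1, h2⟩
      have hHL : ∀ m (hm : i + 1 = m + 2),
          (D.ColliderAt (p[m]'(by omega), p[m+1]'(by omega), p[(i+1)+1]'hk2) →
            ∃ z ∈ Z, D.Desc (p[m+1]'(by omega)) z) ∧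
          (¬ D.ColliderAt (p[m]'(by omega), p[m+1]'(by omega), p[(i+1)+1]'hk2) →
            p[m+1]'(by omega) ∉ Z) := by
        intro m hm
        have hmi : i = m + 1 := by omega
        subst hmi
        have hanotZ : p[m+1]'(by omega) ∉ Z := by
          by_cases hwa : D.dir (p[m]'(by omega)) (p[m+1]'(by omega))
          · intro haZ
            exact hcfact haZ m rfl hwa
          · have ht0 : ((p[m]'(by omega), p[m+1]'(by omega), p[m+2]'(by omega)) : V × V × V)
                ∈ triples p := (mem_triples_iff p _).mpr ⟨m, by omega, rfl⟩
            exact (hconn _ ht0).2 (fun hcol => hwa hcol.1)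
        constructor
        · intro hcol
          exact absurd hcol.2 (fun h => D.dir_asymm h hγ)
        · intro _
          exact hanotZ
      have hHR : ∀ m (hm : i + 1 = m + 1) (hb : (i+1) + 2 < p.length),
          (D.ColliderAt (p[m]'(by omega), p[(i+1)+1]'(by omega), p[(i+1)+2]'hb) →
            ∃ z ∈ Z, D.Desc (p[(i+1)+1]'(by omega)) z) ∧
          (¬ D.ColliderAt (p[m]'(by omega), p[(i+1)+1]'(by omega), p[(i+1)+2]'hb) →
            p[(i+1)+1]'(by omega) ∉ Z) := by
        intro m hm hb
        have hmi : m = i := by omega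
        subst hmi
        have ht1 : ((p[m+1]'(by omega), p[m+2]'(by omega), p[m+3]'(by omega)) : V × V × V)
            ∈ triples p := (mem_triples_iff p _).mpr ⟨m+1, by omega, rfl⟩
        constructor
        · intro hcol
          exact (hconn _ ht1).1 ⟨hβ, hcol.2⟩
        · intro hn
          exact (hconn _ ht1).2 (fun hcol => hn ⟨hγ, hcol.2⟩)
      have hqconn : D.DConn (p.eraseIdx (i+1)) Z := dconn_erase hconn (by omega) hk2 hHL hHR
      by_cases hEx : ∃ m, ∃ h : m + 1 < (p.eraseIdx (i+1)).length,
          D.dir ((p.eraseIdx (i+1))[m+1]'h) ((p.eraseIdx (i+1))[m]'(by omega))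
      · exact hshorter (hshort _ hqproper (noncausal_of_idx hqpath hEx) hqconn)
      · have hfwd := forward_of_no_backward hD hqpath hEx
        rcases Nat.eq_zero_or_pos i with rfl | hip
        · -- i = 0: amenability contradiction
          have hfp2 : ∀ m, 2 ≤ m → ∀ h : m + 1 < p.length,
              D.dir (p[m]'(by omega)) (p[m+1]'(by omega)) := by
            intro m hm2 h
            obtain ⟨n, rfl⟩ : ∃ n, m = n + 2 := ⟨m - 2, by omega⟩
            have hbd : n + 2 < (p.eraseIdx (0+1)).length := by
              rw [length_erase hk2]; omega
            have hstep := hfwd (n+1) (by omega)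
            rw [erase_get_ge p (by omega) (by omega) (by omega),
              erase_get_ge p (by omega) (by omega) (by omega)] at hstep
            exact hstep
          have hreach : ∀ jn (hjn : jn < p.length) (h2 : 2 ≤ jn) an (han : an < jn),
              Relation.TransGen D.dir (p[an]'(by omega)) (p[jn]'hjn) := by
            intro jn hjn h2 an han
            rcases Nat.lt_or_ge an 2 with hlt | hge
            · have hstep : D.dir (p[an]'(by omega)) (p[2]'(by omega)) := by
                rcases Nat.eq_zero_or_pos an with rfl | h1
                · exact hγ
                · obtain rfl : an = 1 := by omega
                  exact hβ
              rcases Nat.lt_or_ge 2 jn with h3 | h3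
              · exact (Relation.TransGen.single hstep).trans
                  (transGen_of_forward D p 2 hfp2 2 jn le_rfl h3 hjn)
              · obtain rfl : jn = 2 := by omega
                exact Relation.TransGen.single hstep
            · exact transGen_of_forward D p 2 hfp2 an jn hge han hjn
          have hpc : G.BPossCausal p := by
            refine ⟨hGp.1, ?_⟩
            intro i' j' hij hgd
            have hDd : D.dir (p.get j') (p.get i') := dir_lift hrep hgd
            simp only [List.get_eq_getElem] at hDd hgd
            rcases Nat.lt_or_ge (j' : ℕ) 2 with hj2 | hj2
            · have hj1 : (j' : ℕ) = 1 := by omega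
              have hi0 : (i' : ℕ) = 0 := by omega
              rw [gidx p hj1 j'.isLt, gidx p hi0 i'.isLt] at hgd
              exact hba hgd
            · exact D.acyclic _ ((hreach j' j'.isLt hj2 i' hij).tail hDd)
          have hfirst := hamen p hGp hpc (p[0]'(by omega)) (p[1]'(by omega))
            (head?_eq' p (by omega)) (tail_head?_eq' p (by omega))
          exact D.dir_asymm (dir_lift hrep hfirst) hα
        · obtain ⟨m1, rfl⟩ : ∃ m1, i = m1 + 1 := ⟨i - 1, by omega⟩
          have hwa : D.dir (p[m1]'(by omega)) (p[m1+1]'(by omega)) := by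
            have hadjwa : D.adj (p[m1]'(by omega)) (p[m1+1]'(by omega)) :=
              hp.1.2.2 _ ((mem_consPairs_iff p _).mpr ⟨m1, by omega, rfl⟩)
            rcases dag_resolve hD hadjwa with h | h
            · exact h
            · exfalso
              apply hEx
              refine ⟨m1, by rw [length_erase hk2]; omega, ?_⟩
              rw [erase_get_lt p (by omega) (by omega) (by rw [length_erase hk2]; omega),
                erase_get_lt p (by omega) (by omega) (by rw [length_erase hk2]; omega)]
              exact h
          have ht0 : ((p[m1]'(by omega), p[m1+1]'(by omega), p[m1+2]'(by omega)) : V × V × V)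
              ∈ triples p := (mem_triples_iff p _).mpr ⟨m1, by omega, rfl⟩
          obtain ⟨z, hz, hdz⟩ := (hconn _ ht0).1 ⟨hwa, hα⟩
          refine causal_contra hrep hforb hqproper hfwd ?_ hz hdz
          refine (mem_tail_iff _ _).mpr ⟨m1, by rw [length_erase hk2]; omega, ?_⟩
          rw [erase_get_lt p (by omega) (by omega) (by rw [length_erase hk2]; omega)]

end Piece6

end PDAG

/-- a shortest proper non-causal d-connecting path in a represented DAG
corresponds in `G` to a proper b-non-causal definite status path whose collider triples
have non-adjacent endpoints. -/
theorem stmt9 {V : Type} (G D : PDAG V) (hG : G.ClosedMeek) (X Y Z : Set V)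
    (hdisj : Disjoint X Y ∧ Disjoint Z X ∧ Disjoint Z Y)
    (hamen : G.BAmenable X Y) (hforb : Z ∩ G.BForb X Y = ∅)
    (hD : D.IsDAG) (hrep : PDAG.RepresentedBy D G)
    (p : List V) (hp : D.ProperPathFromTo X Y p) (hnc : D.NonCausal p)
    (hconn : D.DConn p Z)
    (hshort : ∀ q, D.ProperPathFromTo X Y q → D.NonCausal q → D.DConn q Z →
      p.length ≤ q.length) :
    G.ProperPathFromTo X Y p ∧ G.BNonCausal p ∧ G.DefiniteStatus p ∧
      ∀ t ∈ PDAG.triples p, G.ColliderAt t → ¬ G.adj t.1 t.2.2 := by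
  have hGp := PDAG.proper_transfer hrep hp
  have hpart2 := PDAG.part2 hamen hforb hD hrep hp hnc hconn
  have hkey : ∀ i : ℕ, ∀ hi : i + 2 < p.length, G.adj (p[i]'(by omega)) (p[i+2]'(by omega)) →
      ¬ G.dir (p[i+1]'(by omega)) (p[i]'(by omega)) →
      ¬ G.dir (p[i+1]'(by omega)) (p[i+2]'(by omega)) → False :=
    fun i hi => PDAG.key hamen hforb hD hrep hp hnc hconn hshort hi
  refine ⟨hGp, hpart2, ?_, ?_⟩
  · intro t ht
    rw [PDAG.mem_triples_iff] at ht
    obtain ⟨j, hj, rfl⟩ := ht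
    by_cases h1 : G.dir (p[j+1]'(by omega)) (p[j]'(by omega))
    · exact Or.inr (Or.inl h1)
    by_cases h2 : G.dir (p[j+1]'(by omega)) (p[j+2]'(by omega))
    · exact Or.inr (Or.inr (Or.inl h2))
    have hnadj : ¬ G.adj (p[j]'(by omega)) (p[j+2]'(by omega)) :=
      fun hadj => hkey j hj hadj h1 h2
    have hab : G.adj (p[j]'(by omega)) (p[j+1]'(by omega)) :=
      hGp.1.2.2 _ ((PDAG.mem_consPairs_iff p _).mpr ⟨j, by omega, rfl⟩)
    have hbc : G.adj (p[j+1]'(by omega)) (p[j+2]'(by omega)) :=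
      hGp.1.2.2 _ ((PDAG.mem_consPairs_iff p _).mpr ⟨j+1, by omega, rfl⟩)
    rcases hab with hd1 | hd1 | hu1
    · rcases hbc with hd2 | hd2 | hu2
      · exact absurd hd2 h2
      · exact Or.inl ⟨hd1, hd2⟩
      · exact absurd (hG.1 _ _ _ hd1 hu2 hnadj) h2
    · exact absurd hd1 h1
    · rcases hbc with hd2 | hd2 | hu2
      · exact absurd hd2 h2
      · exact absurd
          (hG.1 _ _ _ hd2 (Or.symm hu1) (fun h => hnadj (G.adj_symm h))) h1
      · exact Or.inr (Or.inr (Or.inr ⟨hu1, hu2, hnadj⟩))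
  · intro t ht hcol
    rw [PDAG.mem_triples_iff] at ht
    obtain ⟨j, hj, rfl⟩ := ht
    intro hadj
    exact hkey j hj hadj (fun h => G.dir_asymm h hcol.1) (fun h => G.dir_asymm h hcol.2)
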